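/- Let X be a consonant topological space such that for every n ∈ ℕ the Scott topology on the n-fold product of the open-set lattice O(X) coincides with the n-fold product of the Scott topology on O(X), i.e., Σ(∏^n O(X)) = ∏^n(Σ O(X)). Then the lower powerspace P_H(X), consisting of the closed subsets of X with the lower Vietoris topology, is consonant. -/

import Mathlib

open Topology TopologicalSpace Set

/-- A set is saturated if it is the intersection of the open sets containing it. -/
def IsSaturatedSet {X : Type*} [t : TopologicalSpace X] (K : Set X) : Prop :=
  K = ⋂₀ {U : Set X | IsOpen U ∧ K ⊆ U}

/-- A topological space `X` is consonant if for every Scott open subset `ℋ` of the open-set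
lattice `O(X)` and every `U ∈ ℋ` there is a compact saturated set `K` with
`U ∈ Φ(K) ⊆ ℋ`, where `Φ(K) = {V ∈ O(X) | K ⊆ V}`. -/
def Consonant (X : Type*) [TopologicalSpace X] : Prop :=
  ∀ H : Set (TopologicalSpace.Opens X),
    IsOpen[Topology.scott (TopologicalSpace.Opens X) Set.univ] H →
    ∀ U ∈ H, ∃ K : Set X, IsCompact K ∧ IsSaturatedSet K ∧ K ⊆ (U : Set X) ∧
      ∀ V : TopologicalSpace.Opens X, K ⊆ (V : Set X) → V ∈ H

/-- The lower Vietoris topology on the lattice of closed subsets of a topological space,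
generated by the subbasis of sets `◊U = {A closed | A ∩ U ≠ ∅}` for `U` open; the resulting
space is the lower powerspace `P_H(X)`. -/
def lowerVietoris (X : Type*) [TopologicalSpace X] :
    TopologicalSpace (TopologicalSpace.Closeds X) :=
  TopologicalSpace.generateFrom
    {S | ∃ U : Set X, IsOpen U ∧ S = {A : TopologicalSpace.Closeds X | ((A : Set X) ∩ U).Nonempty}}

attribute [local instance] lowerVietoris

namespace LVAux

variable {X : Type*} [TopologicalSpace X]

/-- The diamond: closed sets meeting `U`. -/
def diam (U : Set X) : Set (Closeds X) := {A : Closeds X | ((A : Set X) ∩ U).Nonempty}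

lemma mem_diam {U : Set X} {A : Closeds X} : A ∈ diam U ↔ ((A : Set X) ∩ U).Nonempty := Iff.rfl

lemma isOpen_diam {U : Set X} (h : IsOpen U) : IsOpen (diam U) :=
  TopologicalSpace.isOpen_generateFrom_of_mem ⟨U, h, rfl⟩

lemma diam_mono {U V : Set X} (h : U ⊆ V) : diam U ⊆ diam V :=
  fun _ ⟨x, hx1, hx2⟩ => ⟨x, hx1, h hx2⟩

lemma diam_mono' {A B : Closeds X} {U : Set X} (h : A ≤ B) (hA : A ∈ diam U) : B ∈ diam U := by
  obtain ⟨x, hx1, hx2⟩ := hA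
  exact ⟨x, h hx1, hx2⟩

lemma isUpperSet_of_isOpen {W : Set (Closeds X)} (h : IsOpen W) : IsUpperSet W := by
  have h' : TopologicalSpace.GenerateOpen
      {S | ∃ U : Set X, IsOpen U ∧ S = {A : Closeds X | ((A : Set X) ∩ U).Nonempty}} W := h
  clear h
  induction h' with
  | basic s hs =>
    obtain ⟨U, hU, rfl⟩ := hs
    exact fun A B hAB ⟨x, hx1, hx2⟩ => ⟨x, hAB hx1, hx2⟩
  | univ => exact isUpperSet_univ
  | inter a b _ _ iha ihb => exact iha.inter ihb
  | sUnion S hS ih =>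
    intro A B hAB hA
    obtain ⟨s, hs, hAs⟩ := hA
    exact ⟨s, hs, ih s hs hAB hAs⟩

lemma mem_of_bot_mem {W : Set (Closeds X)} (h : IsOpen W) (hb : (⊥ : Closeds X) ∈ W)
    (B : Closeds X) : B ∈ W := by
  have h' : TopologicalSpace.GenerateOpen
      {S | ∃ U : Set X, IsOpen U ∧ S = {A : Closeds X | ((A : Set X) ∩ U).Nonempty}} W := h
  clear h
  induction h' with
  | basic s hs =>
    obtain ⟨U, hU, rfl⟩ := hs
    obtain ⟨x, hx1, _⟩ := hb
    simp at hx1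
  | univ => trivial
  | inter a b _ _ iha ihb => exact ⟨iha hb.1, ihb hb.2⟩
  | sUnion S hS ih =>
    obtain ⟨s, hs, hAs⟩ := hb
    exact ⟨s, hs, ih s hs hAs⟩


lemma closure_inter_open_nonempty {s U : Set X} (hU : IsOpen U) :
    (closure s ∩ U).Nonempty ↔ (s ∩ U).Nonempty := by
  constructor
  · rintro ⟨y, hyc, hyU⟩
    obtain ⟨z, hz1, hz2⟩ := mem_closure_iff.1 hyc U hU hyU
    exact ⟨z, hz2, hz1⟩
  · rintro ⟨y, hy1, hy2⟩
    exact ⟨y, subset_closure hy1, hy2⟩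

/-- The map sending a tuple to the closure of its range. -/
def phi {n : ℕ} (x : Fin n → X) : Closeds X := Closeds.closure (Set.range x)

lemma coe_phi {n : ℕ} (x : Fin n → X) : ((phi x : Closeds X) : Set X) = closure (Set.range x) := by
  simp [phi, Closeds.closure]

lemma continuous_phi (n : ℕ) : Continuous (phi (X := X) (n := n)) := by
  have : Continuous[_, TopologicalSpace.generateFrom
      {S | ∃ U : Set X, IsOpen U ∧ S = {A : Closeds X | ((A : Set X) ∩ U).Nonempty}}]
      (phi (X := X) (n := n)) := by
    rw [continuous_generateFrom_iff]
    rintro s ⟨U, hU, rfl⟩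
    have : phi (X := X) (n := n) ⁻¹' {A : Closeds X | ((A : Set X) ∩ U).Nonempty} =
        ⋃ j : Fin n, (fun x : Fin n → X => x j) ⁻¹' U := by
      ext x
      simp only [mem_preimage, mem_setOf_eq, coe_phi, mem_iUnion,
        closure_inter_open_nonempty hU]
      constructor
      · rintro ⟨y, ⟨j, rfl⟩, hyU⟩
        exact ⟨j, hyU⟩
      · rintro ⟨j, hj⟩
        exact ⟨x j, mem_range_self j, hj⟩
    rw [this]
    exact isOpen_iUnion fun j => hU.preimage (continuous_apply j)
  exact this

theorem pi_tube : ∀ (n : ℕ) (K : Fin n → Set X), (∀ j, IsCompact (K j)) →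
    ∀ (U : Set (Fin n → X)), IsOpen U → univ.pi K ⊆ U →
    ∃ V : Fin n → Set X, (∀ j, IsOpen (V j)) ∧ (∀ j, K j ⊆ V j) ∧ univ.pi V ⊆ U := by
  intro n
  induction n with
  | zero =>
    intro K _ U hU hsub
    exact ⟨fun _ => univ, fun j => j.elim0, fun j => j.elim0,
      fun f _ => hsub (fun i _ => i.elim0)⟩
  | succ n ih =>
    intro K hK U hU hsub
    set g : X × (Fin n → X) → (Fin (n + 1) → X) := fun p => Fin.cons p.1 p.2 with hg
    have hgc : Continuous g := by
      apply continuous_pi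
      intro j
      refine Fin.cases ?_ (fun i => ?_) j
      · simpa [hg] using continuous_fst
      · simp [hg]
        exact (continuous_apply i).comp continuous_snd
    have hp : (K 0) ×ˢ univ.pi (fun j => K j.succ) ⊆ g ⁻¹' U := by
      rintro ⟨a, y⟩ ⟨ha, hy⟩
      refine hsub (fun j _ => ?_)
      refine Fin.cases ?_ (fun i => ?_) j
      · simpa [hg] using ha
      · simpa [hg] using hy i (mem_univ i)
    obtain ⟨u, v, hu, hv, hKu, hKv, huv⟩ :=
      generalized_tube_lemma (hK 0) (isCompact_univ_pi fun j => hK j.succ)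
        (hU.preimage hgc) hp
    obtain ⟨W, hWo, hWs, hWv⟩ := ih (fun j => K j.succ) (fun j => hK j.succ) v hv hKv
    refine ⟨Fin.cons u W, fun j => ?_, fun j => ?_, ?_⟩
    · refine Fin.cases ?_ (fun i => ?_) j <;> simp [hu, hWo]
    · refine Fin.cases ?_ (fun i => ?_) j <;> simp [hKu, hWs]
    · intro f hf
      have h0 : f 0 ∈ u := by simpa using hf 0 (mem_univ _)
      have ht : (fun i => f i.succ) ∈ univ.pi W := by
        intro i _
        simpa using hf i.succ (mem_univ _)
      have : g (f 0, fun i => f i.succ) ∈ U := huv ⟨h0, hWv ht⟩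
      have he : (Fin.cons (f 0) fun i => f i.succ) = f := Fin.cons_self_tail f
      simpa [hg, he] using this

lemma phi_mem_diamInter {n : ℕ} {K : Fin n → Set X} {x : Fin n → X}
    (hx : x ∈ univ.pi K) : phi x ∈ ⋂ j, diam (K j) := by
  refine mem_iInter.2 fun j => ⟨x j, ?_, hx j (mem_univ j)⟩
  rw [coe_phi]
  exact subset_closure (mem_range_self j)

lemma phi_le_of_mem {n : ℕ} {A : Closeds X} {x : Fin n → X}
    (hx : ∀ j, x j ∈ (A : Set X)) : phi x ≤ A := by
  have : closure (Set.range x) ⊆ (A : Set X) :=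
    closure_minimal (range_subset_iff.2 hx) A.2
  rw [← SetLike.coe_subset_coe, coe_phi]
  exact this

/-- Key shrinking lemma: an open set of the lower powerspace containing a finite
intersection of diamonds over compact sets contains one over open supersets. -/
lemma exists_opens_of_diamInter_subset {n : ℕ} {K : Fin n → Set X}
    (hK : ∀ j, IsCompact (K j)) {W : Set (Closeds X)} (hW : IsOpen W)
    (hsub : (⋂ j, diam (K j)) ⊆ W) :
    ∃ V : Fin n → Set X, (∀ j, IsOpen (V j)) ∧ (∀ j, K j ⊆ V j) ∧ (⋂ j, diam (V j)) ⊆ W := by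
  have hpre : univ.pi K ⊆ phi ⁻¹' W := fun x hx => hsub (phi_mem_diamInter hx)
  obtain ⟨V, hVo, hVs, hVsub⟩ := pi_tube n K hK (phi ⁻¹' W)
    (hW.preimage (continuous_phi n)) hpre
  refine ⟨V, hVo, hVs, fun A hA => ?_⟩
  have hA' : ∀ j, ((A : Set X) ∩ V j).Nonempty := fun j => mem_iInter.1 hA j
  choose x hx1 hx2 using hA'
  have hxV : x ∈ univ.pi V := fun j _ => hx2 j
  exact isUpperSet_of_isOpen hW (phi_le_of_mem hx1) (hVsub hxV)

lemma isCompact_diamInter {n : ℕ} {K : Fin n → Set X} (hK : ∀ j, IsCompact (K j)) :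
    IsCompact (⋂ j, diam (K j)) := by
  set C : Set (Closeds X) := phi '' (univ.pi K) with hC
  have hCc : IsCompact C := (isCompact_univ_pi hK).image (continuous_phi n)
  have hCS : C ⊆ ⋂ j, diam (K j) := by
    rintro _ ⟨x, hx, rfl⟩
    exact phi_mem_diamInter hx
  have hKey : ∀ {W : Set (Closeds X)}, IsOpen W → C ⊆ W → (⋂ j, diam (K j)) ⊆ W := by
    intro W hW hCW A hA
    have hA' : ∀ j, ((A : Set X) ∩ K j).Nonempty := fun j => mem_iInter.1 hA j
    choose x hx1 hx2 using hA'
    have : phi x ∈ C := ⟨x, fun j _ => hx2 j, rfl⟩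
    exact isUpperSet_of_isOpen hW (phi_le_of_mem hx1) (hCW this)
  apply isCompact_of_finite_subcover
  intro ι Us hUs hcover
  obtain ⟨t, ht⟩ := hCc.elim_finite_subcover Us hUs (hCS.trans hcover)
  exact ⟨t, hKey (isOpen_biUnion fun i _ => hUs i) ht⟩


lemma fin_addCases_cases {m₁ m₂ : ℕ} (i : Fin (m₁ + m₂)) :
    (∃ i₁ : Fin m₁, i = Fin.castAdd m₂ i₁) ∨ ∃ i₂ : Fin m₂, i = Fin.natAdd m₁ i₂ := by
  by_cases h : (i : ℕ) < m₁
  · exact Or.inl ⟨⟨i, h⟩, Fin.ext (by simp)⟩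
  · refine Or.inr ⟨⟨(i : ℕ) - m₁, by omega⟩, Fin.ext ?_⟩
    simp only [Fin.natAdd, Fin.val_mk]
    omega

lemma diamInter_addCases {n₁ n₂ : ℕ} (V₁ : Fin n₁ → Opens X) (V₂ : Fin n₂ → Opens X) :
    (⋂ j, diam ((Fin.addCases V₁ V₂ j : Opens X) : Set X)) =
      (⋂ j, diam ((V₁ j : Set X))) ∩ ⋂ j, diam ((V₂ j : Set X)) := by
  ext A
  simp only [mem_iInter, mem_inter_iff]
  constructor
  · refine fun h => ⟨fun j => ?_, fun j => ?_⟩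
    · have := h (Fin.castAdd n₂ j)
      rwa [Fin.addCases_left] at this
    · have := h (Fin.natAdd n₁ j)
      rwa [Fin.addCases_right] at this
  · rintro ⟨h1, h2⟩ j
    rcases fin_addCases_cases j with ⟨i, rfl⟩ | ⟨i, rfl⟩
    · rw [Fin.addCases_left]; exact h1 i
    · rw [Fin.addCases_right]; exact h2 i

lemma union_rows_addCases {m₁ m₂ n : ℕ} (V₁ : Fin m₁ → Fin n → Opens X)
    (V₂ : Fin m₂ → Fin n → Opens X) :
    (⋃ i, ⋂ j, diam ((Fin.addCases V₁ V₂ i j : Opens X) : Set X)) =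
      (⋃ i, ⋂ j, diam ((V₁ i j : Set X))) ∪ ⋃ i, ⋂ j, diam ((V₂ i j : Set X)) := by
  ext A
  simp only [mem_iUnion, mem_union]
  constructor
  · rintro ⟨i, hi⟩
    rcases fin_addCases_cases i with ⟨i₁, rfl⟩ | ⟨i₂, rfl⟩
    · rw [Fin.addCases_left] at hi; exact Or.inl ⟨i₁, hi⟩
    · rw [Fin.addCases_right] at hi; exact Or.inr ⟨i₂, hi⟩
  · rintro (⟨i, hi⟩ | ⟨i, hi⟩)
    · exact ⟨Fin.castAdd m₂ i, by rwa [Fin.addCases_left]⟩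
    · exact ⟨Fin.natAdd m₁ i, by rwa [Fin.addCases_right]⟩

/-- Pad a matrix of opens with `n₀ + 1` columns to one with `n + 1` columns (`n₀ ≤ n`)
without changing the associated set. -/
def padCol {m n₀ n : ℕ} (V : Fin m → Fin (n₀ + 1) → Opens X) :
    Fin m → Fin (n + 1) → Opens X :=
  fun i j => V i (if hj : (j : ℕ) < n₀ + 1 then ⟨j, hj⟩ else ⟨0, Nat.succ_pos _⟩)

lemma diamInter_padCol {m n₀ n : ℕ} (hn : n₀ ≤ n) (V : Fin m → Fin (n₀ + 1) → Opens X)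
    (i : Fin m) :
    (⋂ j, diam ((padCol (n := n) V i j : Opens X) : Set X)) =
      ⋂ j, diam ((V i j : Set X)) := by
  apply Subset.antisymm
  · intro A hA
    refine mem_iInter.2 fun j => ?_
    have hj : (j : ℕ) < n + 1 := lt_of_lt_of_le j.2 (Nat.succ_le_succ hn)
    have := mem_iInter.1 hA ⟨(j : ℕ), hj⟩
    simpa [padCol, j.2, Fin.eta] using this
  · intro A hA
    refine mem_iInter.2 fun j => ?_
    by_cases hj : (j : ℕ) < n₀ + 1
    · simpa [padCol, hj] using mem_iInter.1 hA ⟨(j : ℕ), hj⟩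
    · simpa [padCol, hj] using mem_iInter.1 hA ⟨0, Nat.succ_pos _⟩

/-- Every point of an open set of the lower powerspace lies in a basic open set
(finite intersection of diamonds) contained in it. -/
lemma exists_basic_mem {W : Set (Closeds X)} (hW : IsOpen W) :
    ∀ A ∈ W, ∃ (n : ℕ) (V : Fin n → Opens X),
      A ∈ (⋂ j, diam ((V j : Set X))) ∧ (⋂ j, diam ((V j : Set X))) ⊆ W := by
  have h' : TopologicalSpace.GenerateOpen
      {S | ∃ U : Set X, IsOpen U ∧ S = {A : Closeds X | ((A : Set X) ∩ U).Nonempty}} W := hW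
  clear hW
  induction h' with
  | basic s hs =>
    obtain ⟨U, hU, rfl⟩ := hs
    intro A hA
    refine ⟨1, fun _ => ⟨U, hU⟩, mem_iInter.2 fun _ => hA, fun B hB => ?_⟩
    simpa [diam] using mem_iInter.1 hB 0
  | univ => exact fun A _ => ⟨0, fun j => j.elim0, by simp, by simp⟩
  | inter a b _ _ iha ihb =>
    intro A hA
    obtain ⟨n₁, V₁, hm₁, hs₁⟩ := iha A hA.1
    obtain ⟨n₂, V₂, hm₂, hs₂⟩ := ihb A hA.2
    refine ⟨n₁ + n₂, Fin.addCases V₁ V₂, ?_, ?_⟩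
    · rw [diamInter_addCases]; exact ⟨hm₁, hm₂⟩
    · rw [diamInter_addCases]
      exact fun B hB => ⟨hs₁ hB.1, hs₂ hB.2⟩
  | sUnion S hS ih =>
    intro A hA
    obtain ⟨s, hs, hAs⟩ := hA
    obtain ⟨n, V, hm, hsub⟩ := ih s hs A hAs
    exact ⟨n, V, hm, hsub.trans (subset_sUnion_of_mem hs)⟩

end LVAux

lemma scott_isOpen_iff_aux {α : Type*} [Preorder α] {s : Set α} :
    IsOpen[Topology.scott α univ] s ↔ IsUpperSet s ∧ DirSupInacc s := by
  letI := Topology.scott α univ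
  haveI : Topology.IsScott α univ := ⟨rfl⟩
  rw [← dirSupInaccOn_univ]
  exact Topology.IsScott.isOpen_iff_isUpperSet_and_dirSupInaccOn


open LVAux

/-- Let `X` be a consonant space such that for every `n` the Scott topology on the `n`-fold
product of the lattice `O(X)` coincides with the `n`-fold product of the Scott topology on
`O(X)`. Then the lower powerspace `P_H(X)` is consonant. -/
theorem consonant_lowerPowerspace_of_consonant_of_scott_prod
    {X : Type*} [TopologicalSpace X] (hX : Consonant X)
    (hprod : ∀ n : ℕ,
      Topology.scott (Fin n → TopologicalSpace.Opens X) Set.univ =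
        @Pi.topologicalSpace (Fin n) (fun _ => TopologicalSpace.Opens X)
          (fun _ => Topology.scott (TopologicalSpace.Opens X) Set.univ)) :
    @Consonant (TopologicalSpace.Closeds X) (lowerVietoris X) := by
  classical
  intro ℋ hℋ U hU
  rw [scott_isOpen_iff_aux] at hℋ
  obtain ⟨hup, hinacc⟩ := hℋ
  by_cases hbot : (⊥ : Closeds X) ∈ (U : Set (Closeds X))
  · -- the open set `U` contains the empty closed set, hence equals everything;
    -- the whole space is compact saturated and works.
    have hUuniv : ∀ B : Closeds X, B ∈ (U : Set (Closeds X)) :=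
      mem_of_bot_mem U.2 hbot
    refine ⟨univ, ?_, ?_, fun B _ => hUuniv B, ?_⟩
    · apply isCompact_of_finite_subcover
      intro ι Us hUs hcover
      obtain ⟨i₀, hi₀⟩ := mem_iUnion.1 (hcover (mem_univ (⊥ : Closeds X)))
      refine ⟨{i₀}, fun B _ => ?_⟩
      exact mem_biUnion (Finset.mem_singleton_self i₀) (mem_of_bot_mem (hUs i₀) hi₀ B)
    · refine Subset.antisymm (fun A _ => mem_sInter.2 fun W hW => hW.2 (mem_univ A))
        (subset_univ _)
    · intro V hV
      have hle : U ≤ V := SetLike.coe_subset_coe.1 ((subset_univ _).trans hV)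
      exact hup hle hU
  · -- main case: approximate `U` from below by finite unions of basic open sets
    set d : Set (Opens (Closeds X)) :=
      {D | D ≤ U ∧ ∃ (m n : ℕ) (V : Fin m → Fin (n + 1) → Opens X),
        (D : Set (Closeds X)) = ⋃ i, ⋂ j, diam ((V i j : Set X))} with hd
    have hne : d.Nonempty := ⟨⊥, bot_le, 0, 0, Fin.elim0, by simp⟩
    have hdir : DirectedOn (· ≤ ·) d := by
      rintro D₁ ⟨hD₁, m₁, n₁, V₁, hV₁⟩ D₂ ⟨hD₂, m₂, n₂, V₂, hV₂⟩
      have e₁ : (⋃ i, ⋂ j, diam ((padCol (n := max n₁ n₂) V₁ i j : Set X))) =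
          ⋃ i, ⋂ j, diam ((V₁ i j : Set X)) :=
        iUnion_congr fun i => diamInter_padCol (le_max_left n₁ n₂) V₁ i
      have e₂ : (⋃ i, ⋂ j, diam ((padCol (n := max n₁ n₂) V₂ i j : Set X))) =
          ⋃ i, ⋂ j, diam ((V₂ i j : Set X)) :=
        iUnion_congr fun i => diamInter_padCol (le_max_right n₁ n₂) V₂ i
      refine ⟨D₁ ⊔ D₂, ⟨sup_le hD₁ hD₂, m₁ + m₂, max n₁ n₂,
        Fin.addCases (padCol V₁) (padCol V₂), ?_⟩, le_sup_left, le_sup_right⟩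
      rw [Opens.coe_sup, hV₁, hV₂, union_rows_addCases, e₁, e₂]
    have hlub : IsLUB d U := by
      constructor
      · exact fun D hD => hD.1
      · intro B hB
        rw [← SetLike.coe_subset_coe]
        intro A hA
        obtain ⟨n, V, hm, hsub⟩ := exists_basic_mem U.2 A hA
        cases n with
        | zero =>
          exact absurd (hsub (by simp)) hbot
        | succ n₀ =>
          have hD : (⟨⋂ j, diam ((V j : Set X)),
              isOpen_iInter_of_finite fun j => isOpen_diam (V j).2⟩ : Opens (Closeds X)) ∈ d := by
            refine ⟨SetLike.coe_subset_coe.1 hsub, 1, n₀, fun _ => V, ?_⟩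
            simp [iUnion_const]
          exact SetLike.coe_subset_coe.2 (hB hD) hm
    obtain ⟨D₀, hD₀d, hD₀ℋ⟩ := hinacc hne hdir hlub hU
    obtain ⟨hD₀U, m, n', Vm, hVm⟩ := hD₀d
    set e : Fin m × Fin (n' + 1) ≃ Fin (m * (n' + 1)) := finProdFinEquiv with he
    -- the Scott-continuous map from matrices of opens to opens of the powerspace
    set Fm : (Fin (m * (n' + 1)) → Opens X) → Opens (Closeds X) := fun W =>
      ⟨⋃ i : Fin m, ⋂ j : Fin (n' + 1), diam ((W (e (i, j)) : Set X)),
        isOpen_iUnion fun i => isOpen_iInter_of_finite fun j =>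
          isOpen_diam (W (e (i, j))).2⟩ with hFm
    have hFmono : Monotone Fm := by
      intro W W' h
      apply SetLike.coe_subset_coe.1
      exact iUnion_mono fun i => iInter_mono fun j =>
        diam_mono (SetLike.coe_subset_coe.2 (h (e (i, j))))
    set W₀ : Fin (m * (n' + 1)) → Opens X := fun k => Vm (e.symm k).1 (e.symm k).2 with hW₀def
    have hW₀ : ∀ i j, W₀ (e (i, j)) = Vm i j := by
      intro i j
      simp [hW₀def]
    have hFmW₀ : Fm W₀ = D₀ := by
      apply SetLike.coe_injective
      show (⋃ i : Fin m, ⋂ j : Fin (n' + 1), diam ((W₀ (e (i, j)) : Set X))) = (D₀ : Set (Closeds X))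
      rw [hVm]
      exact iUnion_congr fun i => iInter_congr fun j => by rw [hW₀ i j]
    set P : Set (Fin (m * (n' + 1)) → Opens X) := Fm ⁻¹' ℋ with hP
    have hP_up : IsUpperSet P := fun a b hab ha => hup (hFmono hab) ha
    have hP_inacc : DirSupInacc P := by
      intro dd hdd₀ hdir' a hlub' ha
      have ha_eq : a = sSup dd := hlub'.sSup_eq.symm
      haveI : Nonempty dd := hdd₀.to_subtype
      have h1 : ∀ w ∈ dd, Fm w ≤ sSup (Fm '' dd) := fun w hw => le_sSup ⟨w, hw, rfl⟩
      have hkey : (Fm a : Set (Closeds X)) ⊆ ↑(sSup (Fm '' dd)) := by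
        intro A hA
        obtain ⟨i, hi⟩ := mem_iUnion.1 hA
        have hws : ∀ j : Fin (n' + 1), ∃ w : dd, A ∈ diam (((w : Fin (m * (n' + 1)) → Opens X) (e (i, j)) : Set X)) := by
          intro j
          have hji := mem_iInter.1 hi j
          rw [ha_eq] at hji
          have hcoe : ((sSup dd (e (i, j)) : Opens X) : Set X) =
              ⋃ w : dd, (((w : Fin (m * (n' + 1)) → Opens X) (e (i, j)) : Opens X) : Set X) := by
            rw [sSup_apply, Opens.coe_iSup]
          rw [mem_diam, hcoe, inter_iUnion] at hji
          obtain ⟨w, hw⟩ := Set.nonempty_iUnion.1 hji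
          exact ⟨w, hw⟩
        choose w hw using hws
        obtain ⟨z, hz⟩ := (directedOn_iff_directed.1 hdir').finset_le (Finset.univ.image w)
        have hAz : A ∈ ⋂ j : Fin (n' + 1), diam (((z : Fin (m * (n' + 1)) → Opens X) (e (i, j)) : Set X)) := by
          refine mem_iInter.2 fun j => ?_
          have hle : (w j : Fin (m * (n' + 1)) → Opens X) ≤ z :=
            hz (w j) (Finset.mem_image_of_mem w (Finset.mem_univ j))
          exact diam_mono (SetLike.coe_subset_coe.2 (hle (e (i, j)))) (hw j)
        exact SetLike.coe_subset_coe.2 (h1 z z.2) (mem_iUnion.2 ⟨i, hAz⟩)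
      have hsup_mem : sSup (Fm '' dd) ∈ ℋ := hup (SetLike.coe_subset_coe.1 hkey) ha
      have hdirE : DirectedOn (· ≤ ·) (Fm '' dd) := by
        rintro _ ⟨w₁, hw₁, rfl⟩ _ ⟨w₂, hw₂, rfl⟩
        obtain ⟨w₃, hw₃, h13, h23⟩ := hdir' w₁ hw₁ w₂ hw₂
        exact ⟨Fm w₃, ⟨w₃, hw₃, rfl⟩, hFmono h13, hFmono h23⟩
      obtain ⟨b, ⟨wob, hwdd, rfl⟩, hbℋ⟩ :=
        hinacc (hdd₀.image Fm) hdirE (isLUB_sSup _) hsup_mem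
      exact ⟨wob, hwdd, hbℋ⟩
    have hPscott : IsOpen[Topology.scott (Fin (m * (n' + 1)) → Opens X) Set.univ] P :=
      scott_isOpen_iff_aux.mpr ⟨hP_up, hP_inacc⟩
    have hPpi : @IsOpen _ (@Pi.topologicalSpace (Fin (m * (n' + 1))) (fun _ => Opens X)
        (fun _ => Topology.scott (Opens X) Set.univ)) P := by
      rw [← hprod (m * (n' + 1))]
      exact hPscott
    have hW₀P : W₀ ∈ P := by
      show Fm W₀ ∈ ℋ
      rw [hFmW₀]
      exact hD₀ℋ
    obtain ⟨I, u, hu, husub⟩ :=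
      (@isOpen_pi_iff (Fin (m * (n' + 1))) (fun _ => Opens X)
        (fun _ => Topology.scott (Opens X) Set.univ) P).1 hPpi W₀ hW₀P
    -- use consonance of `X` coordinatewise
    have hcons : ∀ k : Fin (m * (n' + 1)), ∃ K : Set X, IsCompact K ∧ K ⊆ (W₀ k : Set X) ∧
        (k ∈ I → ∀ V : Opens X, K ⊆ (V : Set X) → V ∈ u k) := by
      intro k
      by_cases hk : k ∈ I
      · obtain ⟨K, hKc, _, hKsub, hKΦ⟩ := hX (u k) (hu k hk).1 (W₀ k) (hu k hk).2
        exact ⟨K, hKc, hKsub, fun _ => hKΦ⟩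
      · exact ⟨∅, isCompact_empty, empty_subset _, fun h => absurd h hk⟩
    choose K' hK'c hK'sub hK'Φ using hcons
    have hbox : ∀ V' : Fin (m * (n' + 1)) → Opens X,
        (∀ k, K' k ⊆ (V' k : Set X)) → Fm V' ∈ ℋ := by
      intro V' hV'
      apply husub
      intro k hk
      exact hK'Φ k hk (V' k) (hV' k)
    -- the compact saturated set
    set 𝒦 : Set (Closeds X) := ⋃ i : Fin m, ⋂ j : Fin (n' + 1), diam (K' (e (i, j))) with h𝒦
    refine ⟨𝒦, ?_, ?_, ?_, ?_⟩
    · exact isCompact_iUnion fun i => isCompact_diamInter fun j => hK'c _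
    · -- saturated
      apply Subset.antisymm
      · exact fun A hA => mem_sInter.2 fun W hW => hW.2 hA
      · intro A hA
        by_contra hA𝒦
        have hj : ∀ i : Fin m, ∃ j : Fin (n' + 1), ((A : Set X) ∩ K' (e (i, j))) = ∅ := by
          intro i
          by_contra h
          push_neg at h
          exact hA𝒦 (mem_iUnion.2
            ⟨i, mem_iInter.2 fun j => h j⟩)
        choose jj hjj using hj
        have hWopen : IsOpen (diam ((A : Set X)ᶜ)) := isOpen_diam A.2.isOpen_compl
        have h𝒦W : 𝒦 ⊆ diam ((A : Set X)ᶜ) := by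
          intro B hB
          obtain ⟨i, hi⟩ := mem_iUnion.1 hB
          obtain ⟨x, hx1, hx2⟩ := mem_iInter.1 hi (jj i)
          refine ⟨x, hx1, fun hxA => ?_⟩
          have : x ∈ ((A : Set X) ∩ K' (e (i, jj i))) := ⟨hxA, hx2⟩
          rw [hjj i] at this
          exact this
        obtain ⟨x, hx1, hx2⟩ := mem_sInter.1 hA _ ⟨hWopen, h𝒦W⟩
        exact hx2 hx1
    · -- contained in U
      intro A hA
      obtain ⟨i, hi⟩ := mem_iUnion.1 hA
      have hAD : A ∈ (D₀ : Set (Closeds X)) := by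
        rw [hVm]
        refine mem_iUnion.2 ⟨i, mem_iInter.2 fun j => ?_⟩
        have hsubV : K' (e (i, j)) ⊆ (Vm i j : Set X) := by
          rw [← hW₀ i j]
          exact hK'sub (e (i, j))
        exact diam_mono hsubV (mem_iInter.1 hi j)
      exact SetLike.coe_subset_coe.2 hD₀U hAD
    · -- Φ(𝒦) ⊆ ℋ
      intro Wop hKW
      have hrow : ∀ i : Fin m, ∃ V' : Fin (n' + 1) → Set X, (∀ j, IsOpen (V' j)) ∧
          (∀ j, K' (e (i, j)) ⊆ V' j) ∧ (⋂ j, diam (V' j)) ⊆ (Wop : Set (Closeds X)) := by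
        intro i
        apply exists_opens_of_diamInter_subset (fun j => hK'c _) Wop.2
        exact (subset_iUnion (fun i => ⋂ j : Fin (n' + 1), diam (K' (e (i, j)))) i).trans hKW
      choose V' hV'o hV's hV'sub using hrow
      set V'' : Fin (m * (n' + 1)) → Opens X :=
        fun k => ⟨V' (e.symm k).1 (e.symm k).2, hV'o _ _⟩ with hV''
      have hV''box : ∀ k, K' k ⊆ (V'' k : Set X) := by
        intro k
        have h1 : K' k = K' (e ((e.symm k).1, (e.symm k).2)) := by
          rw [Prod.mk.eta, Equiv.apply_symm_apply]
        rw [h1]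
        exact hV's (e.symm k).1 (e.symm k).2
      have hFV'' := hbox V'' hV''box
      refine hup ?_ hFV''
      rw [← SetLike.coe_subset_coe]
      intro A hA
      obtain ⟨i, hi⟩ := mem_iUnion.1 hA
      apply hV'sub i
      refine mem_iInter.2 fun j => ?_
      have hmem := mem_iInter.1 hi j
      rwa [show ((V'' (e (i, j)) : Opens X) : Set X) = V' i j from by simp [hV'']] at hmem
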